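/- Let H be tridiagonal with positive diagonal, β = max_{i∈[n-1]} |H_{i,i+1}|/√(H_{ii}H_{i+1,i+1}) < 1, and X the tridiagonal LogDet preconditioner satisfying P_G(X⁻¹) = H. Then for any y ∈ ℝⁿ, yᵀX⁻¹y ≤ ‖y‖₂² · ‖diag(H)‖₂ · (1+β)/(1-β). -/

import Mathlib

open Matrix

private lemma geom_aux {b : ℝ} (h0 : 0 ≤ b) (h1 : b < 1) (m : ℕ) :
    ∑ k ∈ Finset.range m, b ^ k ≤ 1 / (1 - b) := by
  have h2 : (0:ℝ) < 1 - b := by linarith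
  rw [geom_sum_eq (ne_of_lt h1)]
  have key : (b ^ m - 1) / (b - 1) = (1 - b ^ m) / (1 - b) := by
    rw [← neg_div_neg_eq]; ring_nf
  rw [key, div_le_div_iff₀ h2 h2]
  have hp : (0:ℝ) ≤ b ^ m := pow_nonneg h0 m
  nlinarith

private lemma distsum_aux {b : ℝ} (h0 : 0 ≤ b) (h1 : b < 1) {n i : ℕ} (hi : i < n) :
    ∑ j ∈ Finset.range n, b ^ (Nat.dist i j) ≤ (1 + b) / (1 - b) := by
  have h2 : (0:ℝ) < 1 - b := by linarith
  rw [← Finset.sum_range_add_sum_Ico _ (le_of_lt hi)]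
  have hA : ∑ j ∈ Finset.range i, b ^ Nat.dist i j = ∑ j ∈ Finset.range i, b ^ (j + 1) := by
    rw [← Finset.sum_range_reflect (fun j => b ^ (j + 1)) i]
    apply Finset.sum_congr rfl
    intro j hj
    simp only [Finset.mem_range] at hj
    congr 1
    simp [Nat.dist]; omega
  have hB : ∑ j ∈ Finset.Ico i n, b ^ Nat.dist i j = ∑ k ∈ Finset.range (n - i), b ^ k := by
    rw [Finset.sum_Ico_eq_sum_range]
    apply Finset.sum_congr rfl
    intro k _
    congr 1
    simp [Nat.dist]
  rw [hA, hB]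
  have g1 : ∑ j ∈ Finset.range i, b ^ (j + 1) ≤ b * (1 / (1 - b)) := by
    have : ∑ j ∈ Finset.range i, b ^ (j + 1) = b * ∑ j ∈ Finset.range i, b ^ j := by
      rw [Finset.mul_sum]; exact Finset.sum_congr rfl fun j _ => by ring
    rw [this]
    exact mul_le_mul_of_nonneg_left (geom_aux h0 h1 i) h0
  have g2 : ∑ k ∈ Finset.range (n - i), b ^ k ≤ 1 / (1 - b) := geom_aux h0 h1 _
  have : b * (1 / (1 - b)) + 1 / (1 - b) = (1 + b) / (1 - b) := by
    field_simp; ring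
  linarith

private lemma claimA {n : ℕ} (X : Matrix (Fin n) (Fin n) ℝ)
    (hXPD : X.PosDef)
    (hXsp : ∀ i j : Fin n, ((i : ℕ) + 1 < (j : ℕ) ∨ (j : ℕ) + 1 < (i : ℕ)) → X i j = 0)
    (M : Matrix (Fin n) (Fin n) ℝ) (hXM : X * M = 1)
    (p j : Fin n) (hpj : (p : ℕ) + 1 = (j : ℕ)) (hMpp : M p p ≠ 0)
    (i : Fin n) (hij : (i : ℕ) < (j : ℕ)) :
    M i j * M p p = M i p * M p j := by
  set c : ℝ := M p j / M p p with hc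
  set u : Fin n → ℝ := fun l => if (l : ℕ) < (j : ℕ) then M l j - c * M l p else 0 with hu
  have hup : u p = 0 := by
    simp only [hu]
    rw [if_pos (by omega)]
    rw [hc, div_mul_cancel₀ _ hMpp]
    ring
  have hXu : ∀ i' : Fin n, i' ≠ p → (X *ᵥ u) i' = 0 := by
    intro i' hi'p
    have hvne : (i' : ℕ) ≠ (p : ℕ) := fun h => hi'p (Fin.ext h)
    rcases lt_or_ge (i' : ℕ) (p : ℕ) with hlt | hge
    · have h1 : (i' : ℕ) + 1 < (j : ℕ) := by omega
      have : (X *ᵥ u) i' = ∑ l, (X i' l * M l j - c * (X i' l * M l p)) := by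
        simp only [mulVec, dotProduct]
        apply Finset.sum_congr rfl
        intro l _
        by_cases hl : (l : ℕ) < (j : ℕ)
        · simp only [hu, if_pos hl]; ring
        · have hXz : X i' l = 0 := hXsp i' l (Or.inl (by omega))
          simp only [hu, if_neg hl, hXz]; ring
      rw [this, Finset.sum_sub_distrib, ← Finset.mul_sum]
      have e1 : ∑ l, X i' l * M l j = (X * M) i' j := (Matrix.mul_apply).symm
      have e2 : ∑ l, X i' l * M l p = (X * M) i' p := (Matrix.mul_apply).symm
      rw [e1, e2, hXM]
      rw [Matrix.one_apply_ne (fun h => by rw [h] at h1; omega),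
        Matrix.one_apply_ne hi'p]
      ring
    · have : (X *ᵥ u) i' = 0 := by
        simp only [mulVec, dotProduct]
        apply Finset.sum_eq_zero
        intro l _
        by_cases hl : (l : ℕ) < (j : ℕ)
        · by_cases hlp : l = p
          · rw [hlp, hup, mul_zero]
          · have : (l : ℕ) + 1 < (i' : ℕ) := by
              have : (l : ℕ) ≠ (p : ℕ) := fun h => hlp (Fin.ext h)
              omega
            rw [hXsp i' l (Or.inr this), zero_mul]
        · simp only [hu, if_neg hl, mul_zero]
      exact this
  have hu0 : u = 0 := by
    by_contra h
    have hpos := hXPD.dotProduct_mulVec_pos h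
    have : star u ⬝ᵥ (X *ᵥ u) = 0 := by
      simp only [star_trivial, dotProduct]
      apply Finset.sum_eq_zero
      intro i' _
      by_cases hip : i' = p
      · rw [hip, hup, zero_mul]
      · rw [hXu i' hip, mul_zero]
    rw [this] at hpos
    exact lt_irrefl 0 hpos
  have hui : u i = 0 := by rw [hu0]; rfl
  have : M i j - c * M i p = 0 := by
    have h := hui
    simp only [hu, if_pos hij] at h
    exact h
  have hMij : M i j = c * M i p := by linarith
  rw [hMij, hc]
  field_simp

theorem tridiag_inverse_quadratic_form_bound {n : ℕ} (hn : 1 < n)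
    (H X : Matrix (Fin n) (Fin n) ℝ) (hsym : H.IsSymm)
    (hdiag : ∀ i, 0 < H i i)
    (hsp : ∀ i j : Fin n, ((i : ℕ) + 1 < (j : ℕ) ∨ (j : ℕ) + 1 < (i : ℕ)) → H i j = 0)
    (hXPD : X.PosDef)
    (hXsp : ∀ i j : Fin n, ((i : ℕ) + 1 < (j : ℕ) ∨ (j : ℕ) + 1 < (i : ℕ)) → X i j = 0)
    (hopt : ∀ i j : Fin n, ¬ ((i : ℕ) + 1 < (j : ℕ) ∨ (j : ℕ) + 1 < (i : ℕ)) →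
      X⁻¹ i j = H i j)
    (β : ℝ)
    (hβdef : β = Finset.univ.sup'
      (Finset.univ_nonempty_iff.mpr ⟨⟨0, by omega⟩⟩)
      (fun i : Fin (n - 1) =>
        |H ⟨i.1 + 1, by have := i.isLt; omega⟩ ⟨i.1, by have := i.isLt; omega⟩| /
          Real.sqrt (H ⟨i.1, by have := i.isLt; omega⟩ ⟨i.1, by have := i.isLt; omega⟩ *
            H ⟨i.1 + 1, by have := i.isLt; omega⟩ ⟨i.1 + 1, by have := i.isLt; omega⟩)))
    (hβlt : β < 1)
    (y : Fin n → ℝ) :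
    y ⬝ᵥ (X⁻¹ *ᵥ y) ≤
      (∑ i, (y i) ^ 2) *
        (Finset.univ.sup' (Finset.univ_nonempty_iff.mpr ⟨⟨0, by omega⟩⟩)
          (fun i : Fin n => H i i)) *
        ((1 + β) / (1 - β)) := by
  have hdet : IsUnit X.det := (Matrix.PosDef.det_pos hXPD).ne'.isUnit
  have hXM : X * X⁻¹ = 1 := Matrix.mul_nonsing_inv X hdet
  -- β is nonnegative
  have hβ0 : 0 ≤ β := by
    rw [hβdef]
    refine le_trans ?_ (Finset.le_sup' _ (Finset.mem_univ (⟨0, by omega⟩ : Fin (n - 1))))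
    exact div_nonneg (abs_nonneg _) (Real.sqrt_nonneg _)
  -- off-diagonal bound from β definition
  have hb : ∀ p j : Fin n, (p : ℕ) + 1 = (j : ℕ) →
      |H p j| ≤ β * (Real.sqrt (H p p) * Real.sqrt (H j j)) := by
    intro p j hpj
    have hpn : (p : ℕ) < n - 1 := by have := j.isLt; omega
    have hterm := Finset.le_sup'
      (fun i : Fin (n - 1) =>
        |H ⟨i.1 + 1, by have := i.isLt; omega⟩ ⟨i.1, by have := i.isLt; omega⟩| /
          Real.sqrt (H ⟨i.1, by have := i.isLt; omega⟩ ⟨i.1, by have := i.isLt; omega⟩ *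
            H ⟨i.1 + 1, by have := i.isLt; omega⟩ ⟨i.1 + 1, by have := i.isLt; omega⟩))
      (Finset.mem_univ (⟨(p : ℕ), hpn⟩ : Fin (n - 1)))
    rw [← hβdef] at hterm
    have hep : (⟨(p : ℕ), by omega⟩ : Fin n) = p := Fin.ext rfl
    have hej : (⟨(p : ℕ) + 1, by omega⟩ : Fin n) = j := Fin.ext hpj
    simp only [hep, hej] at hterm
    have hHpj : H p j = H j p := by
      have := hsym.apply p j
      exact this.symm
    have hsq : 0 < Real.sqrt (H p p * H j j) :=
      Real.sqrt_pos.mpr (mul_pos (hdiag p) (hdiag j))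
    rw [div_le_iff₀ hsq] at hterm
    rw [hHpj]
    calc |H j p| ≤ β * Real.sqrt (H p p * H j j) := hterm
      _ = β * (Real.sqrt (H p p) * Real.sqrt (H j j)) := by
          rw [Real.sqrt_mul (hdiag p).le]
  -- entrywise bound on X⁻¹ for i ≤ j
  have bound : ∀ k : ℕ, ∀ i j : Fin n, (j : ℕ) = (i : ℕ) + k →
      |X⁻¹ i j| ≤ β ^ k * (Real.sqrt (H i i) * Real.sqrt (H j j)) := by
    intro k
    induction k with
    | zero =>
      intro i j hji
      have : j = i := Fin.ext (by omega)
      subst this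
      have hd : X⁻¹ j j = H j j := hopt j j (by omega)
      rw [hd, pow_zero, one_mul, Real.mul_self_sqrt (hdiag j).le,
        abs_of_pos (hdiag j)]
    | succ k ih =>
      intro i j hji
      set p : Fin n := ⟨(j : ℕ) - 1, by omega⟩ with hp
      have hpj : (p : ℕ) + 1 = (j : ℕ) := by simp [hp]; omega
      have hpi : (p : ℕ) = (i : ℕ) + k := by simp [hp]; omega
      have hMpp : X⁻¹ p p = H p p := hopt p p (by omega)
      have hMpj : X⁻¹ p j = H p j := hopt p j (by omega)
      have hrec := claimA X hXPD hXsp X⁻¹ hXM p j hpj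
        (by rw [hMpp]; exact (hdiag p).ne') i (by omega)
      rw [hMpp, hMpj] at hrec
      have hMij : X⁻¹ i j = X⁻¹ i p * H p j / H p p := by
        field_simp [(hdiag p).ne'] at hrec ⊢
        linarith [hrec]
      have hip := ih i p hpi
      have hsp2 : Real.sqrt (H p p) * Real.sqrt (H p p) = H p p :=
        Real.mul_self_sqrt (hdiag p).le
      calc |X⁻¹ i j| = |X⁻¹ i p| * |H p j| / H p p := by
            rw [hMij, abs_div, abs_mul, abs_of_pos (hdiag p)]
        _ ≤ (β ^ k * (Real.sqrt (H i i) * Real.sqrt (H p p))) *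
              (β * (Real.sqrt (H p p) * Real.sqrt (H j j))) / H p p := by
            apply (div_le_div_iff_of_pos_right (hdiag p)).mpr
            exact mul_le_mul hip (hb p j hpj) (abs_nonneg _)
              (mul_nonneg (pow_nonneg hβ0 k)
                (mul_nonneg (Real.sqrt_nonneg _) (Real.sqrt_nonneg _)))
        _ = β ^ (k + 1) * (Real.sqrt (H i i) * Real.sqrt (H j j)) := by
            have heq : (β ^ k * (Real.sqrt (H i i) * Real.sqrt (H p p))) *
                (β * (Real.sqrt (H p p) * Real.sqrt (H j j))) =
                (β ^ (k + 1) * (Real.sqrt (H i i) * Real.sqrt (H j j))) *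
                  (Real.sqrt (H p p) * Real.sqrt (H p p)) := by ring
            rw [heq, hsp2, mul_div_assoc, div_self (hdiag p).ne', mul_one]
  -- symmetric entrywise bound
  have hherm : (X⁻¹).IsHermitian := hXPD.1.inv
  have bound2 : ∀ i j : Fin n, |X⁻¹ i j| ≤
      β ^ (Nat.dist (i : ℕ) (j : ℕ)) * (Real.sqrt (H i i) * Real.sqrt (H j j)) := by
    intro i j
    rcases le_or_gt (i : ℕ) (j : ℕ) with hle | hlt
    · rw [Nat.dist_eq_sub_of_le hle]
      exact bound _ i j (by omega)
    · have hsymm : X⁻¹ i j = X⁻¹ j i := by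
        have h := hherm.apply i j
        rw [star_trivial] at h
        exact h.symm
      rw [hsymm, Nat.dist_eq_sub_of_le_right hlt.le]
      calc |X⁻¹ j i| ≤ β ^ ((i:ℕ) - (j:ℕ)) * (Real.sqrt (H j j) * Real.sqrt (H i i)) :=
            bound _ j i (by omega)
        _ = β ^ ((i:ℕ) - (j:ℕ)) * (Real.sqrt (H i i) * Real.sqrt (H j j)) := by ring
  have hβd : (0:ℝ) < 1 - β := by linarith
  have hC0 : 0 ≤ (1 + β) / (1 - β) := div_nonneg (by linarith) hβd.le
  set z : Fin n → ℝ := fun i => |y i| * Real.sqrt (H i i) with hz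
  have step1 : y ⬝ᵥ (X⁻¹ *ᵥ y) ≤
      ∑ i : Fin n, ∑ j : Fin n, β ^ (Nat.dist i.1 j.1) * (z i * z j) := by
    have expand : y ⬝ᵥ (X⁻¹ *ᵥ y) = ∑ i : Fin n, ∑ j : Fin n, y i * (X⁻¹ i j * y j) := by
      simp [dotProduct, mulVec, Finset.mul_sum]
    rw [expand]
    apply Finset.sum_le_sum
    intro i _
    apply Finset.sum_le_sum
    intro j _
    calc y i * (X⁻¹ i j * y j) ≤ |y i * (X⁻¹ i j * y j)| := le_abs_self _
      _ = |y i| * |X⁻¹ i j| * |y j| := by rw [abs_mul, abs_mul]; ring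
      _ ≤ |y i| * (β ^ (Nat.dist i.1 j.1) *
            (Real.sqrt (H i i) * Real.sqrt (H j j))) * |y j| :=
          mul_le_mul_of_nonneg_right
            (mul_le_mul_of_nonneg_left (bound2 i j) (abs_nonneg _)) (abs_nonneg _)
      _ = β ^ (Nat.dist i.1 j.1) * (z i * z j) := by simp only [hz]; ring
  have step2 : ∑ i : Fin n, ∑ j : Fin n, β ^ (Nat.dist i.1 j.1) * (z i * z j) ≤
      ∑ i : Fin n, ∑ j : Fin n, β ^ (Nat.dist i.1 j.1) * ((z i ^ 2 + z j ^ 2) / 2) := by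
    apply Finset.sum_le_sum; intro i _
    apply Finset.sum_le_sum; intro j _
    apply mul_le_mul_of_nonneg_left _ (pow_nonneg hβ0 _)
    nlinarith [sq_nonneg (z i - z j)]
  have step3 : ∑ i : Fin n, ∑ j : Fin n, β ^ (Nat.dist i.1 j.1) * ((z i ^ 2 + z j ^ 2) / 2) =
      ∑ i : Fin n, z i ^ 2 * ∑ j : Fin n, β ^ (Nat.dist i.1 j.1) := by
    have inner : ∀ i : Fin n,
        ∑ j : Fin n, β ^ (Nat.dist i.1 j.1) * ((z i ^ 2 + z j ^ 2) / 2) =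
        (∑ j : Fin n, β ^ (Nat.dist i.1 j.1) * z i ^ 2) / 2 +
          (∑ j : Fin n, β ^ (Nat.dist i.1 j.1) * z j ^ 2) / 2 := by
      intro i
      rw [← add_div, ← Finset.sum_add_distrib, Finset.sum_div]
      apply Finset.sum_congr rfl
      intro j _
      ring
    have swap : ∑ i : Fin n, ∑ j : Fin n, β ^ (Nat.dist i.1 j.1) * z j ^ 2 =
        ∑ i : Fin n, ∑ j : Fin n, β ^ (Nat.dist i.1 j.1) * z i ^ 2 := by
      rw [Finset.sum_comm]
      apply Finset.sum_congr rfl; intro i _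
      apply Finset.sum_congr rfl; intro j _
      rw [Nat.dist_comm]
    calc ∑ i : Fin n, ∑ j : Fin n, β ^ (Nat.dist i.1 j.1) * ((z i ^ 2 + z j ^ 2) / 2)
        = ∑ i : Fin n, ((∑ j : Fin n, β ^ (Nat.dist i.1 j.1) * z i ^ 2) / 2 +
            (∑ j : Fin n, β ^ (Nat.dist i.1 j.1) * z j ^ 2) / 2) :=
          Finset.sum_congr rfl fun i _ => inner i
      _ = (∑ i : Fin n, ∑ j : Fin n, β ^ (Nat.dist i.1 j.1) * z i ^ 2) / 2 +
            (∑ i : Fin n, ∑ j : Fin n, β ^ (Nat.dist i.1 j.1) * z j ^ 2) / 2 := by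
          rw [Finset.sum_add_distrib, Finset.sum_div, Finset.sum_div]
      _ = ∑ i : Fin n, ∑ j : Fin n, β ^ (Nat.dist i.1 j.1) * z i ^ 2 := by
          rw [swap]; ring
      _ = ∑ i : Fin n, z i ^ 2 * ∑ j : Fin n, β ^ (Nat.dist i.1 j.1) := by
          apply Finset.sum_congr rfl; intro i _
          rw [Finset.mul_sum]
          apply Finset.sum_congr rfl; intro j _
          ring
  have step4 : ∑ i : Fin n, z i ^ 2 * ∑ j : Fin n, β ^ (Nat.dist i.1 j.1) ≤
      (∑ i, z i ^ 2) * ((1 + β) / (1 - β)) := by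
    rw [Finset.sum_mul]
    apply Finset.sum_le_sum
    intro i _
    apply mul_le_mul_of_nonneg_left _ (sq_nonneg _)
    have : ∑ j : Fin n, β ^ (Nat.dist i.1 j.1) =
        ∑ m ∈ Finset.range n, β ^ (Nat.dist (i:ℕ) m) :=
      Fin.sum_univ_eq_sum_range (fun m => β ^ (Nat.dist (i:ℕ) m)) n
    rw [this]
    exact distsum_aux hβ0 hβlt i.isLt
  have hzS : ∑ i, z i ^ 2 ≤ (∑ i, (y i) ^ 2) *
      (Finset.univ.sup' (Finset.univ_nonempty_iff.mpr ⟨(⟨0, by omega⟩ : Fin n)⟩)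
        (fun i : Fin n => H i i)) := by
    rw [Finset.sum_mul]
    apply Finset.sum_le_sum
    intro i _
    have hz2 : z i ^ 2 = y i ^ 2 * H i i := by
      simp only [hz]
      rw [mul_pow, sq_abs, Real.sq_sqrt (hdiag i).le]
    rw [hz2]
    exact mul_le_mul_of_nonneg_left
      (Finset.le_sup' (fun i : Fin n => H i i) (Finset.mem_univ i)) (sq_nonneg _)
  calc y ⬝ᵥ (X⁻¹ *ᵥ y) ≤ (∑ i, z i ^ 2) * ((1 + β) / (1 - β)) := by
        refine step1.trans (step2.trans ?_)
        rw [step3]; exact step4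
    _ ≤ ((∑ i, (y i) ^ 2) *
          (Finset.univ.sup' (Finset.univ_nonempty_iff.mpr ⟨(⟨0, by omega⟩ : Fin n)⟩)
            (fun i : Fin n => H i i))) * ((1 + β) / (1 - β)) :=
        mul_le_mul_of_nonneg_right hzS hC0
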